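/- arXiv:1312.2767 — 2 statements merged into one kernel-verified Lean document; each statement's English description precedes it below -/
import Mathlib

section
/- For m=2, the coefficients C_n(q) of the series C_q(u) = E(-qu)/E(-u) satisfy C_n(q) = Σ_{k=0}^{n-1} q^k C_k(q) C_{n-1-k}(q) for n ≥ 1, with C_0(q)=1. -/
/-- The q-Pochhammer symbol `(a;q)_n`. -/
noncomputable def qPoch (a q : ℝ) (n : ℕ) : ℝ := ∏ j ∈ Finset.range n, (1 - q ^ j * a)

lemma qPoch_pos (q : ℝ) (hq0 : 0 < q) (hq1 : q < 1) (n : ℕ) : 0 < qPoch q q n := by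
  apply Finset.prod_pos
  intro j _
  have : q ^ j * q ≤ 1 * q := by
    apply mul_le_mul_of_nonneg_right _ hq0.le
    exact pow_le_one₀ hq0.le hq1.le
  nlinarith

theorem q_catalan_convolution (q : ℝ) (hq0 : 0 < q) (hq1 : q < 1)
    (E C : PowerSeries ℝ)
    (hE : E = PowerSeries.mk fun n => q ^ (n * (n - 1)) / qPoch q q n)
    (hC : C = PowerSeries.rescale (-q) E * (PowerSeries.rescale (-1) E)⁻¹) :
    PowerSeries.coeff 0 C = 1 ∧
      ∀ n, 1 ≤ n →
        PowerSeries.coeff n C =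
          ∑ k ∈ Finset.range n,
            q ^ k * PowerSeries.coeff k C * PowerSeries.coeff (n - 1 - k) C := by
  set A := PowerSeries.rescale (-1) E with hA
  set B := PowerSeries.rescale (-q) E with hB
  set D := PowerSeries.rescale (-q^2) E with hD
  have hP := qPoch_pos q hq0 hq1
  have hE0 : PowerSeries.coeff 0 E = 1 := by
    simp [hE, qPoch]
  have hA0 : PowerSeries.constantCoeff A ≠ 0 := by
    rw [hA, ← PowerSeries.coeff_zero_eq_constantCoeff, PowerSeries.coeff_rescale, hE0]
    norm_num
  have hB0 : PowerSeries.constantCoeff B ≠ 0 := by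
    rw [hB, ← PowerSeries.coeff_zero_eq_constantCoeff, PowerSeries.coeff_rescale, hE0]
    norm_num
  -- key functional equation : B = A + X * D
  have key : B = A + PowerSeries.X * D := by
    ext n
    rw [map_add]
    cases n with
    | zero =>
      simp [hB, hA, PowerSeries.coeff_rescale, hE0]
    | succ m =>
      rw [PowerSeries.coeff_succ_X_mul]
      rw [hB, hA, hD, PowerSeries.coeff_rescale, PowerSeries.coeff_rescale,
        PowerSeries.coeff_rescale, hE, PowerSeries.coeff_mk, PowerSeries.coeff_mk]
      have hPm := (hP m).ne'
      have hPm1 := (hP (m + 1)).ne'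
      have hprod : qPoch q q (m + 1) = qPoch q q m * (1 - q ^ m * q) := by
        rw [qPoch, Finset.prod_range_succ]; rfl
      cases m with
      | zero => simp [qPoch] at *; field_simp; ring
      | succ k =>
        have h1 : (k + 1 + 1) * (k + 1 + 1 - 1) = (k + 1) * (k + 1 - 1) + 2 * (k + 1) := by
          simp only [Nat.add_sub_cancel]
          ring
        rw [hprod] at hPm1 ⊢
        rw [h1]
        have hq1k : (1 : ℝ) - q ^ (k + 1) * q ≠ 0 := by
          have h2 : q ^ (k + 1) ≤ 1 := pow_le_one₀ hq0.le hq1.le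
          nlinarith
        have hPk := (hP (k + 1)).ne'
        have hq1k' : (1 : ℝ) - q * q ^ (k + 1) ≠ 0 := by rwa [mul_comm] at hq1k
        field_simp
        ring
  have hCA : C * A = B := by
    rw [hC]
    have : PowerSeries.rescale (-q) E * A⁻¹ * A =
        PowerSeries.rescale (-q) E * (A⁻¹ * A) := by ring
    rw [this, PowerSeries.inv_mul_cancel A hA0, mul_one]
  -- rescale q C = D * B⁻¹
  have hresA : PowerSeries.rescale q A = B := by
    rw [hA, hB, PowerSeries.rescale_rescale]
    norm_num
  have hresB : PowerSeries.rescale q B = D := by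
    rw [hB, hD, PowerSeries.rescale_rescale]
    congr 1
    ring
  have hCq : PowerSeries.rescale q C * B = D := by
    have := congrArg (PowerSeries.rescale q) hCA
    rw [map_mul, hresA, hresB] at this
    exact this
  -- C = 1 + X * (rescale q C * C)
  have main : C = 1 + PowerSeries.X * (PowerSeries.rescale q C * C) := by
    have h1 : C * A = (1 + PowerSeries.X * (PowerSeries.rescale q C * C)) * A := by
      rw [hCA, key]
      have h2 : (1 + PowerSeries.X * (PowerSeries.rescale q C * C)) * A =
          A + PowerSeries.X * (PowerSeries.rescale q C * (C * A)) := by ring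
      rw [h2, hCA]
      have h3 : PowerSeries.rescale q C * B = D := hCq
      rw [h3]
    have hAunit : IsUnit A := by
      refine IsUnit.of_mul_eq_one A⁻¹ ?_
      exact PowerSeries.mul_inv_cancel A hA0
    exact hAunit.mul_right_cancel h1
  constructor
  · rw [hC]
    rw [PowerSeries.coeff_zero_eq_constantCoeff, map_mul]
    rw [PowerSeries.constantCoeff_inv]
    have h1 : PowerSeries.constantCoeff (PowerSeries.rescale (-q) E) = 1 := by
      rw [← PowerSeries.coeff_zero_eq_constantCoeff, PowerSeries.coeff_rescale, hE0]
      norm_num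
    have h2 : PowerSeries.constantCoeff (PowerSeries.rescale (-1) E) = 1 := by
      rw [← PowerSeries.coeff_zero_eq_constantCoeff, PowerSeries.coeff_rescale, hE0]
      norm_num
    rw [h1, h2]; norm_num
  · intro n hn
    obtain ⟨m, rfl⟩ := Nat.exists_eq_add_of_le hn
    have h1m : 1 + m = m + 1 := by omega
    rw [h1m]
    simp only [Nat.add_sub_cancel]
    conv_lhs => rw [main]
    rw [map_add]
    have hone : (PowerSeries.coeff (m + 1)) (1 : PowerSeries ℝ) = 0 := by
      rw [PowerSeries.coeff_one]
      simp
    rw [hone, zero_add, PowerSeries.coeff_succ_X_mul, PowerSeries.coeff_mul]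
    rw [Finset.Nat.sum_antidiagonal_eq_sum_range_succ
      (fun i j => PowerSeries.coeff i (PowerSeries.rescale q C) * PowerSeries.coeff j C) m]
    apply Finset.sum_congr rfl
    intro k hk
    rw [PowerSeries.coeff_rescale]
end

section
/- Let G(u,z,q) = Σ_{n≥0} q^{n²-n} u^n/((z;q)_n (q;q)_n) as a formal power series in u. Then G(qu,qz,q) - G(u,z,q) = -(u/((1-z)(1-qz))) G(q²u,q²z,q). -/
lemma qPoch_succ (a q : ℝ) (n : ℕ) : qPoch a q (n+1) = qPoch a q n * (1 - q ^ n * a) :=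
  Finset.prod_range_succ _ _

lemma qPoch_succ' (a q : ℝ) (n : ℕ) : qPoch a q (n+1) = (1 - a) * qPoch (q*a) q n := by
  rw [qPoch, Finset.prod_range_succ', pow_zero, one_mul, mul_comm, qPoch]
  congr 1
  exact Finset.prod_congr rfl fun j _ => by ring_nf

lemma qPoch_q_ne (q : ℝ) (hq0 : 0 < q) (hq1 : q < 1) (n : ℕ) : qPoch q q n ≠ 0 := by
  rw [qPoch, Finset.prod_ne_zero_iff]
  intro j _
  have h1 : q ^ j * q < 1 := by
    calc q ^ j * q ≤ 1 * q := by
          apply mul_le_mul_of_nonneg_right _ hq0.le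
          exact pow_le_one₀ hq0.le hq1.le
      _ < 1 := by simpa using hq1
  linarith

lemma qPoch_z_ne (q z : ℝ) (hz : ∀ j : ℕ, 1 - q ^ j * z ≠ 0) (k n : ℕ) :
    qPoch (q ^ k * z) q n ≠ 0 := by
  rw [qPoch, Finset.prod_ne_zero_iff]
  intro j _
  have := hz (j + k)
  rw [pow_add] at this
  simpa [mul_assoc] using this

theorem G_functional_equation (q z : ℝ) (hq0 : 0 < q) (hq1 : q < 1)
    (hz : ∀ j : ℕ, 1 - q ^ j * z ≠ 0)
    (G : ℝ → PowerSeries ℝ)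
    (hG : ∀ w : ℝ, G w = PowerSeries.mk fun n => q ^ (n * (n - 1)) / (qPoch w q n * qPoch q q n)) :
    PowerSeries.rescale q (G (q * z)) - G z =
      -(PowerSeries.C (1 / ((1 - z) * (1 - q * z)))) * PowerSeries.X *
        PowerSeries.rescale (q ^ 2) (G (q ^ 2 * z)) := by
  have hz0 : (1 : ℝ) - z ≠ 0 := by simpa using hz 0
  have hz1 : (1 : ℝ) - q * z ≠ 0 := by simpa using hz 1
  ext n
  rw [neg_mul, neg_mul, map_sub, map_neg, mul_assoc, PowerSeries.coeff_C_mul]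
  rw [hG (q*z), hG z, hG (q^2*z)]
  cases n with
  | zero =>
      simp [qPoch]
  | succ n =>
      rw [PowerSeries.coeff_succ_X_mul, PowerSeries.coeff_rescale, PowerSeries.coeff_rescale,
        PowerSeries.coeff_mk, PowerSeries.coeff_mk, PowerSeries.coeff_mk]
      have hE : qPoch q q n ≠ 0 := qPoch_q_ne q hq0 hq1 n
      have hq : (1 : ℝ) - q ^ n * q ≠ 0 := by
        have h1 : q ^ n * q < 1 := by
          calc q ^ n * q ≤ 1 * q := by
                apply mul_le_mul_of_nonneg_right _ hq0.le
                exact pow_le_one₀ hq0.le hq1.le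
            _ < 1 := by simpa using hq1
        linarith
      have hB' : qPoch (q * z) q n ≠ 0 := by
        have := qPoch_z_ne q z hz 1 n; simpa using this
      have hC : qPoch (q ^ 2 * z) q n ≠ 0 := qPoch_z_ne q z hz 2 n
      have hzn : (1 : ℝ) - q ^ n * (q * z) ≠ 0 := by
        have := hz (n + 1)
        rw [pow_add] at this
        simpa [mul_assoc] using this
      -- pochhammer identities
      have hA : qPoch z q (n+1) = (1 - z) * qPoch (q*z) q n := by
        simpa using qPoch_succ' z q n
      have hB : qPoch (q*z) q (n+1) = qPoch (q*z) q n * (1 - q ^ n * (q*z)) := qPoch_succ _ _ _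
      have hBC : qPoch (q*z) q (n+1) = (1 - q*z) * qPoch (q^2*z) q n := by
        have := qPoch_succ' (q*z) q n
        rw [this]
        congr 2
        ring
      have hD : qPoch q q (n+1) = qPoch q q n * (1 - q ^ n * q) := qPoch_succ _ _ _
      -- exponent arithmetic
      have hexp : (n+1) * ((n+1) - 1) = 2 * n + n * (n - 1) := by
        cases n with
        | zero => rfl
        | succ m => simp [Nat.succ_sub_one]; ring
      rw [hA, hD, hexp]
      have key : qPoch (q*z) q n * (1 - q ^ n * (q*z)) = (1 - q*z) * qPoch (q^2*z) q n := by
        rw [← hB, hBC]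
      have hQ : q ^ (2 * n + n * (n-1)) = q ^ (2*n) * q ^ (n * (n-1)) := pow_add _ _ _
      rw [hB, hQ]
      have h2n : (q ^ 2) ^ n = q ^ (2 * n) := by rw [← pow_mul]
      rw [h2n]
      have hC' : qPoch (q^2*z) q n = qPoch (q*z) q n * (1 - q ^ n * (q*z)) / (1 - q*z) := by
        rw [key]; field_simp
      have hq' : (1 : ℝ) - q * q ^ n ≠ 0 := by rwa [mul_comm]
      have hzn' : (1 : ℝ) - q * z * q ^ n ≠ 0 := by rwa [mul_comm]
      rw [hC']
      field_simp
      ring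
end
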